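/- Every nonempty prefix of an inverse Lyndon word is an inverse Lyndon word. -/

import Mathlib

namespace LynArr

variable {α : Type*} [LinearOrder α]

/-- Strict lexicographic order on words:
`u ≺ v` iff `u` is a proper prefix of `v`, or at the first differing position `u` is smaller. -/
def Llt (u v : List α) : Prop := List.Lex (· < ·) u v

/-- The suffix `x_i = x[i..n]` (1-based indexing). -/
def suff (x : List α) (i : ℕ) : List α := x.drop (i - 1)

/-- The subword `x[i..j]` (1-based, inclusive). -/
def sub (x : List α) (i j : ℕ) : List α := (x.drop (i - 1)).take (j - i + 1)

/-- `w` is a Lyndon word: nonempty and lexicographically smaller than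
all of its nonempty proper suffixes. -/
def IsLyndon (w : List α) : Prop :=
  w ≠ [] ∧ ∀ k, 0 < k → k < w.length → Llt w (w.drop k)

/-- `w` is an inverse Lyndon word: nonempty and lexicographically greater than
all of its nonempty proper suffixes. -/
def IsInvLyndon (w : List α) : Prop :=
  w ≠ [] ∧ ∀ k, 0 < k → k < w.length → Llt (w.drop k) w

/-- `lce x i j`: the length of the longest common prefix of the suffixes `x_i` and `x_j`. -/
def lce (x : List α) (i j : ℕ) : ℕ :=
  (((suff x i).zip (suff x j)).takeWhile fun p => p.1 == p.2).length


lemma lex_take {u v : List α} (h : List.Lex (· < ·) u v) :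
    ∀ m n : ℕ, m ≤ n →
      List.Lex (· < ·) (u.take m) (v.take n) ∨ u.take m <+: v.take n := by
  induction h with
  | nil => intro m n _; right; simp
  | @rel a l b l' hab =>
      intro m n hmn
      match m, n with
      | 0, _ => right; simp
      | m+1, 0 => omega
      | m+1, n+1 => left; exact List.Lex.rel hab
  | @cons a l l' _ ih =>
      intro m n hmn
      match m, n with
      | 0, _ => right; simp
      | m+1, 0 => omega
      | m+1, n+1 =>
          rcases ih m n (by omega) with h1 | h2
          · left; exact List.Lex.cons h1
          · right; simpa using h2

lemma lex_of_proper_prefix {u v : List α} (h : u <+: v) (hne : u ≠ v) :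
    List.Lex (· < ·) u v := by
  obtain ⟨t, rfl⟩ := h
  induction u with
  | nil =>
      cases t with
      | nil => simp at hne
      | cons a t => exact List.Lex.nil
  | cons a u ih =>
      exact List.Lex.cons (ih (by simpa using hne))

/-- Every nonempty prefix of an inverse Lyndon word is an inverse Lyndon word. -/
theorem isInvLyndon_of_prefix {α : Type*} [LinearOrder α] (w p : List α)
    (hw : IsInvLyndon w) (hp : p ≠ []) (hpre : p <+: w) :
    IsInvLyndon p := by
  refine ⟨hp, fun k hk hkp => ?_⟩
  obtain ⟨t, rfl⟩ := hpre
  have hkw : k < p.length + t.length := by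
    have := (p.length_append : (p ++ t).length = _); omega
  have hlex : List.Lex (· < ·) ((p ++ t).drop k) (p ++ t) := by
    have := hw.2 k hk (by simpa using hkw)
    simpa [Llt] using this
  have hdp : p.drop k = ((p ++ t).drop k).take (p.length - k) := by
    rw [List.drop_append_of_le_length (le_of_lt hkp), List.take_left']
    simp [List.length_drop]
  have hpp : p = (p ++ t).take p.length := by
    rw [List.take_left']; rfl
  have := lex_take hlex (p.length - k) p.length (by omega)
  rw [← hdp, ← hpp] at this
  rcases this with h1 | h2
  · exact h1
  · refine lex_of_proper_prefix h2 ?_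
    intro he
    have : (p.drop k).length = p.length := by rw [he]
    simp [List.length_drop] at this
    omega

end LynArr
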